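/- Let S be a finite nonempty type. Let P, Q, and P̂ be row-stochastic S × S real matrices (all entries nonnegative and each row summing to 1), let μ be a stationary distribution of P and ν a stationary distribution of Q, and let δ : S → ℝ be nonnegative with ∑_{s'} |P(s,s') − P̂(s,s')| ≤ δ(s) and ∑_{s'} |Q(s,s') − P̂(s,s')| ≤ δ(s) for every s. Let C ≥ 1 and 0 < ρ < 1 be reals such that for every probability vector λ on S and every integer t ≥ 1, ∑_s |(λPᵗ)(s) − μ(s)| ≤ C·ρᵗ, and set n̂ := ⌈log C / log(1/ρ)⌉ and β := 2·(n̂ + C·ρ^{n̂}/(1 − ρ)) · max_s δ(s). If f : S → ℝ satisfies 0 ≤ f(s) ≤ 1 for all s and ∑_s ν(s)·f(s) ≥ η for some real η, then ∑_s μ(s)·f(s) ≥ η − β. -/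

import Mathlib

/-- Lemma 7 (consbound) in finite-matrix form: with `P, Q` within ℓ₁ radius `δ s` of the
estimate `P̂` on each row, `μ, ν` their stationary distributions, geometric ergodicity of
`P` with constants `C ≥ 1`, `0 < ρ < 1`, `n̂ = ⌈log C / log(1/ρ)⌉` and
`β = 2 (n̂ + C ρ^n̂ / (1−ρ)) max_s δ s`: if `E_ν f ≥ η` for `f : S → [0,1]`,
then `E_μ f ≥ η − β`. -/
theorem stmt10 {S : Type*} [Fintype S] [DecidableEq S] [Nonempty S]
    (P Q Phat : Matrix S S ℝ) (μ ν : S → ℝ) (δ : S → ℝ) (C ρ η : ℝ)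
    (hP0 : ∀ s s', 0 ≤ P s s') (hP1 : ∀ s, ∑ s', P s s' = 1)
    (hQ0 : ∀ s s', 0 ≤ Q s s') (hQ1 : ∀ s, ∑ s', Q s s' = 1)
    (hPhat0 : ∀ s s', 0 ≤ Phat s s') (hPhat1 : ∀ s, ∑ s', Phat s s' = 1)
    (hμ0 : ∀ s, 0 ≤ μ s) (hμ1 : ∑ s, μ s = 1) (hμP : Matrix.vecMul μ P = μ)
    (hν0 : ∀ s, 0 ≤ ν s) (hν1 : ∑ s, ν s = 1) (hνQ : Matrix.vecMul ν Q = ν)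
    (hδ0 : ∀ s, 0 ≤ δ s)
    (hPδ : ∀ s, ∑ s', |P s s' - Phat s s'| ≤ δ s)
    (hQδ : ∀ s, ∑ s', |Q s s' - Phat s s'| ≤ δ s)
    (hC : 1 ≤ C) (hρ0 : 0 < ρ) (hρ1 : ρ < 1)
    (hmix : ∀ l : S → ℝ, (∀ s, 0 ≤ l s) → ∑ s, l s = 1 →
      ∀ t : ℕ, 1 ≤ t → ∑ s, |Matrix.vecMul l (P ^ t) s - μ s| ≤ C * ρ ^ t) :
    ∀ f : S → ℝ, (∀ s, 0 ≤ f s ∧ f s ≤ 1) →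
      η ≤ ∑ s, ν s * f s →
      η - 2 * ((⌈Real.log C / Real.log (1 / ρ)⌉ : ℝ)
            + C * ρ ^ (⌈Real.log C / Real.log (1 / ρ)⌉ : ℤ) / (1 - ρ))
          * Finset.univ.sup' Finset.univ_nonempty δ
        ≤ ∑ s, μ s * f s := by
  intro f hf hη
  classical
  obtain ⟨s₀⟩ := ‹Nonempty S›
  set N : ℕ := (⌈Real.log C / Real.log (1 / ρ)⌉).toNat with hNdef
  set Δ : ℝ := Finset.univ.sup' Finset.univ_nonempty δ with hΔdef
  have hΔ0 : 0 ≤ Δ := le_trans (hδ0 s₀) (Finset.le_sup' δ (Finset.mem_univ s₀))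
  have hδΔ : ∀ s, δ s ≤ Δ := fun s => Finset.le_sup' δ (Finset.mem_univ s)
  have hceil0 : (0 : ℤ) ≤ ⌈Real.log C / Real.log (1 / ρ)⌉ := by
    apply Int.ceil_nonneg
    apply div_nonneg (Real.log_nonneg hC)
    exact le_of_lt (Real.log_pos ((one_lt_div hρ0).mpr hρ1))
  have hNcast : ((⌈Real.log C / Real.log (1 / ρ)⌉ : ℤ) : ℝ) = (N : ℝ) := by
    rw [hNdef]
    exact_mod_cast (Int.toNat_of_nonneg hceil0).symm
  have hzpow : ρ ^ (⌈Real.log C / Real.log (1 / ρ)⌉ : ℤ) = ρ ^ N := by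
    rw [hNdef, ← zpow_natCast, Int.toNat_of_nonneg hceil0]
  -- entrywise formula for vecMul
  have hvm : ∀ (x : S → ℝ) (M : Matrix S S ℝ) (s' : S),
      Matrix.vecMul x M s' = ∑ s, x s * M s s' := by
    intro x M s'
    simp [Matrix.vecMul, dotProduct]
  -- one-step ℓ¹ contraction
  have contract : ∀ x : S → ℝ, ∑ s', |Matrix.vecMul x P s'| ≤ ∑ s, |x s| := by
    intro x
    calc ∑ s', |Matrix.vecMul x P s'| ≤ ∑ s', ∑ s, |x s| * P s s' := by
          refine Finset.sum_le_sum fun s' _ => ?_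
          rw [hvm]
          refine (Finset.abs_sum_le_sum_abs _ _).trans ?_
          refine Finset.sum_le_sum fun s _ => ?_
          rw [abs_mul, abs_of_nonneg (hP0 s s')]
      _ = ∑ s, |x s| := by
          rw [Finset.sum_comm]
          simp_rw [← Finset.mul_sum, hP1, mul_one]
  have contractPow : ∀ (x : S → ℝ) (t : ℕ),
      ∑ s', |Matrix.vecMul x (P ^ t) s'| ≤ ∑ s, |x s| := by
    intro x t
    induction t with
    | zero => simp [Matrix.vecMul_one]
    | succ t ih =>
      have h : Matrix.vecMul x (P ^ (t + 1)) = Matrix.vecMul (Matrix.vecMul x (P ^ t)) P := by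
        rw [Matrix.vecMul_vecMul, ← pow_succ]
      rw [h]
      exact le_trans (contract _) ih
  -- the perturbation vector
  set w : S → ℝ := fun s => ν s - Matrix.vecMul ν P s with hwdef
  have hw1 : ∑ s, |w s| ≤ 2 * Δ := by
    have hpt : ∀ s', |w s'| ≤ ∑ s, ν s * |Q s s' - P s s'| := by
      intro s'
      have hν : ν s' = Matrix.vecMul ν Q s' := by rw [hνQ]
      have hch : w s' = ∑ s, ν s * (Q s s' - P s s') := by
        show ν s' - Matrix.vecMul ν P s' = _
        rw [hν, hvm, hvm, ← Finset.sum_sub_distrib]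
        exact Finset.sum_congr rfl fun s _ => by ring
      rw [hch]
      refine (Finset.abs_sum_le_sum_abs _ _).trans ?_
      refine Finset.sum_le_sum fun s _ => ?_
      rw [abs_mul, abs_of_nonneg (hν0 s)]
    calc ∑ s', |w s'| ≤ ∑ s', ∑ s, ν s * |Q s s' - P s s'| :=
          Finset.sum_le_sum fun s' _ => hpt s'
      _ = ∑ s, ν s * ∑ s', |Q s s' - P s s'| := by
          rw [Finset.sum_comm]; simp_rw [Finset.mul_sum]
      _ ≤ ∑ s, ν s * (2 * Δ) := by
          refine Finset.sum_le_sum fun s _ => ?_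
          refine mul_le_mul_of_nonneg_left ?_ (hν0 s)
          calc ∑ s', |Q s s' - P s s'|
              ≤ ∑ s', (|Q s s' - Phat s s'| + |P s s' - Phat s s'|) := by
                refine Finset.sum_le_sum fun s' _ => ?_
                have h : Q s s' - P s s' = (Q s s' - Phat s s') - (P s s' - Phat s s') := by ring
                rw [h]
                exact abs_sub _ _
            _ = (∑ s', |Q s s' - Phat s s'|) + ∑ s', |P s s' - Phat s s'| :=
                Finset.sum_add_distrib
            _ ≤ δ s + δ s := add_le_add (hQδ s) (hPδ s)
            _ ≤ 2 * Δ := by have := hδΔ s; linarith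
      _ = 2 * Δ := by rw [← Finset.sum_mul, hν1, one_mul]
  have hwsum : ∑ s, w s = 0 := by
    have hPs : ∑ s', Matrix.vecMul ν P s' = 1 := by
      simp_rw [hvm]
      rw [Finset.sum_comm]
      simp_rw [← Finset.mul_sum, hP1, mul_one]
      exact hν1
    have : ∑ s, w s = (∑ s, ν s) - ∑ s', Matrix.vecMul ν P s' := by
      rw [← Finset.sum_sub_distrib]
    rw [this, hν1, hPs]; ring
  -- positive part mass
  set a : ℝ := ∑ s, max (w s) 0 with hadef
  have ha0 : 0 ≤ a := Finset.sum_nonneg fun s _ => le_max_right _ _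
  have hmaxabs : ∀ x : ℝ, 2 * max x 0 = |x| + x := by
    intro x
    rcases le_total 0 x with h | h
    · rw [max_eq_left h, abs_of_nonneg h]; ring
    · rw [max_eq_right h, abs_of_nonpos h]; ring
  have h2a : 2 * a = ∑ s, |w s| := by
    calc 2 * a = ∑ s, (|w s| + w s) := by
          rw [hadef, Finset.mul_sum]
          exact Finset.sum_congr rfl fun s _ => hmaxabs (w s)
      _ = (∑ s, |w s|) + ∑ s, w s := Finset.sum_add_distrib
      _ = ∑ s, |w s| := by rw [hwsum, add_zero]
  have haΔ : a ≤ Δ := by linarith [hw1]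
  -- linearity helper
  have hlin : ∀ (x y : S → ℝ) (c : ℝ) (M : Matrix S S ℝ) (s : S),
      Matrix.vecMul (fun u => c * (x u - y u)) M s
        = c * (Matrix.vecMul x M s - Matrix.vecMul y M s) := by
    intro x y c M s
    simp_rw [hvm, mul_sub, Finset.mul_sum, ← Finset.sum_sub_distrib]
    exact Finset.sum_congr rfl fun u _ => by ring
  -- key mixing bound for the zero-sum vector w
  have key : ∀ t : ℕ, 1 ≤ t → ∑ s, |Matrix.vecMul w (P ^ t) s| ≤ 2 * Δ * (C * ρ ^ t) := by
    intro t ht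
    have hrhs0 : 0 ≤ 2 * Δ * (C * ρ ^ t) := by
      apply mul_nonneg (by linarith)
      exact mul_nonneg (by linarith) (pow_nonneg hρ0.le t)
    rcases eq_or_lt_of_le ha0 with ha | ha
    · -- a = 0 forces w = 0
      have hmax0 : ∀ s, max (w s) 0 = 0 := by
        intro s
        have h := (Finset.sum_eq_zero_iff_of_nonneg
          (fun s _ => le_max_right (w s) 0)).mp ha.symm
        exact h s (Finset.mem_univ s)
      have hwle : ∀ s, w s ≤ 0 := fun s => max_eq_right_iff.mp (hmax0 s)
      have hw0 : ∀ s, w s = 0 := by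
        intro s
        have h := (Finset.sum_eq_zero_iff_of_nonneg
          (fun s _ => neg_nonneg.mpr (hwle s))).mp (by rw [Finset.sum_neg_distrib, hwsum, neg_zero])
        have := h s (Finset.mem_univ s)
        linarith
      have : w = 0 := funext hw0
      rw [this, Matrix.zero_vecMul]
      simpa using hrhs0
    · set lp : S → ℝ := fun s => max (w s) 0 / a with hlp
      set lm : S → ℝ := fun s => max (-w s) 0 / a with hlm
      have hlp0 : ∀ s, 0 ≤ lp s := fun s => div_nonneg (le_max_right _ _) ha0
      have hlm0 : ∀ s, 0 ≤ lm s := fun s => div_nonneg (le_max_right _ _) ha0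
      have hlpsum : ∑ s, lp s = 1 := by
        simp_rw [hlp]
        rw [← Finset.sum_div, div_eq_one_iff_eq (ne_of_gt ha)]
      have hmneg : ∀ x : ℝ, max (-x) 0 = max x 0 - x := by
        intro x
        rcases le_total 0 x with h | h
        · rw [max_eq_right (neg_nonpos_of_nonneg h), max_eq_left h]; ring
        · rw [max_eq_left (neg_nonneg_of_nonpos h), max_eq_right h]; ring
      have hlmsum : ∑ s, lm s = 1 := by
        simp_rw [hlm]
        rw [← Finset.sum_div, div_eq_one_iff_eq (ne_of_gt ha)]
        calc ∑ s, max (-w s) 0 = ∑ s, (max (w s) 0 - w s) :=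
              Finset.sum_congr rfl fun s _ => hmneg (w s)
          _ = a - ∑ s, w s := by rw [Finset.sum_sub_distrib, hadef]
          _ = a := by rw [hwsum, sub_zero]
      have hdecomp : w = fun u => a * (lp u - lm u) := by
        funext u
        simp only [hlp, hlm]
        rw [hmneg (w u)]
        field_simp
        ring
      have h1 := hmix lp hlp0 hlpsum t ht
      have h2 := hmix lm hlm0 hlmsum t ht
      calc ∑ s, |Matrix.vecMul w (P ^ t) s|
          = ∑ s, |a * ((Matrix.vecMul lp (P ^ t) s - μ s)
              - (Matrix.vecMul lm (P ^ t) s - μ s))| := by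
            refine Finset.sum_congr rfl fun s _ => ?_
            rw [hdecomp, hlin]
            congr 1
            ring
        _ ≤ ∑ s, (a * |Matrix.vecMul lp (P ^ t) s - μ s|
              + a * |Matrix.vecMul lm (P ^ t) s - μ s|) := by
            refine Finset.sum_le_sum fun s _ => ?_
            rw [abs_mul, abs_of_nonneg ha0]
            rw [← mul_add]
            exact mul_le_mul_of_nonneg_left (abs_sub _ _) ha0
        _ = a * (∑ s, |Matrix.vecMul lp (P ^ t) s - μ s|)
              + a * ∑ s, |Matrix.vecMul lm (P ^ t) s - μ s| := by
            rw [Finset.sum_add_distrib, Finset.mul_sum, Finset.mul_sum]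
        _ ≤ a * (C * ρ ^ t) + a * (C * ρ ^ t) :=
            add_le_add (mul_le_mul_of_nonneg_left h1 ha0)
              (mul_le_mul_of_nonneg_left h2 ha0)
        _ ≤ 2 * Δ * (C * ρ ^ t) := by
            have hC0 : 0 ≤ C * ρ ^ t := mul_nonneg (by linarith) (pow_nonneg hρ0.le t)
            nlinarith
  -- telescoping identity
  have tel : ∀ (T : ℕ) (s : S), ν s - μ s =
      (∑ i ∈ Finset.range T, Matrix.vecMul w (P ^ i) s)
        + (Matrix.vecMul ν (P ^ T) s - μ s) := by
    intro T s
    have hterm : ∀ i : ℕ, Matrix.vecMul w (P ^ i) s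
        = Matrix.vecMul ν (P ^ i) s - Matrix.vecMul ν (P ^ (i + 1)) s := by
      intro i
      have hw' : w = ν - Matrix.vecMul ν P := by
        funext u
        simp [hwdef]
      rw [hw', Matrix.sub_vecMul, Pi.sub_apply, Matrix.vecMul_vecMul, ← pow_succ']
    have hts : ∑ i ∈ Finset.range T, Matrix.vecMul w (P ^ i) s
        = Matrix.vecMul ν (P ^ 0) s - Matrix.vecMul ν (P ^ T) s := by
      simp_rw [hterm]
      exact Finset.sum_range_sub' (fun i => Matrix.vecMul ν (P ^ i) s) T
    rw [hts]
    simp [Matrix.vecMul_one]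
  -- per-index bound
  have gbound : ∀ i : ℕ, ∑ s, |Matrix.vecMul w (P ^ i) s| ≤
      (if i < N then 2 * Δ else 2 * Δ * (C * ρ ^ i)) := by
    intro i
    by_cases hi : i < N
    · rw [if_pos hi]; exact le_trans (contractPow w i) hw1
    · rw [if_neg hi]
      rcases Nat.eq_zero_or_pos i with h0 | h1
      · subst h0
        refine le_trans (le_trans (contractPow w 0) hw1) ?_
        rw [pow_zero, mul_one]
        nlinarith
      · exact key i h1
  -- geometric sum bound
  have sumb : ∀ T : ℕ, (∑ i ∈ Finset.range T, (if i < N then 2 * Δ else 2 * Δ * (C * ρ ^ i)))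
      ≤ 2 * Δ * N + 2 * Δ * (C * ρ ^ N / (1 - ρ)) := by
    intro T
    have hb0 : ∀ i : ℕ, 0 ≤ (if i < N then 2 * Δ else 2 * Δ * (C * ρ ^ i)) := by
      intro i
      split
      · linarith
      · exact mul_nonneg (by linarith) (mul_nonneg (by linarith) (pow_nonneg hρ0.le i))
    set M : ℕ := max T N with hMdef
    have hsub : Finset.range T ⊆ Finset.range M := Finset.range_subset_range.mpr (le_max_left _ _)
    refine le_trans (Finset.sum_le_sum_of_subset_of_nonneg hsub fun i _ _ => hb0 i) ?_
    have hNM : N ≤ M := le_max_right _ _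
    rw [← Finset.sum_range_add_sum_Ico _ hNM]
    have hpart1 : ∑ i ∈ Finset.range N, (if i < N then 2 * Δ else 2 * Δ * (C * ρ ^ i))
        = 2 * Δ * N := by
      rw [Finset.sum_congr rfl fun i hi => if_pos (Finset.mem_range.mp hi)]
      rw [Finset.sum_const, Finset.card_range, nsmul_eq_mul]
      ring
    have hpart2 : ∑ i ∈ Finset.Ico N M, (if i < N then 2 * Δ else 2 * Δ * (C * ρ ^ i))
        ≤ 2 * Δ * (C * ρ ^ N / (1 - ρ)) := by
      have heq : ∑ i ∈ Finset.Ico N M, (if i < N then 2 * Δ else 2 * Δ * (C * ρ ^ i))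
          = ∑ i ∈ Finset.Ico N M, 2 * Δ * (C * ρ ^ i) := by
        refine Finset.sum_congr rfl fun i hi => ?_
        rw [if_neg (not_lt.mpr (Finset.mem_Ico.mp hi).1)]
      rw [heq]
      have geo : ∑ i ∈ Finset.Ico N M, ρ ^ i ≤ ρ ^ N / (1 - ρ) := by
        rw [Finset.sum_Ico_eq_sum_range]
        simp_rw [pow_add]
        rw [← Finset.mul_sum]
        have hg : ∑ i ∈ Finset.range (M - N), ρ ^ i ≤ 1 / (1 - ρ) := by
          rw [geom_sum_eq (ne_of_lt hρ1)]
          have heq2 : (ρ ^ (M - N) - 1) / (ρ - 1) = (1 - ρ ^ (M - N)) / (1 - ρ) := by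
            rw [div_eq_div_iff (by linarith) (by linarith)]
            ring
          rw [heq2]
          have hk : (0 : ℝ) ≤ ρ ^ (M - N) := pow_nonneg hρ0.le _
          exact div_le_div₀ (by norm_num) (by linarith) (by linarith) le_rfl
        calc ρ ^ N * ∑ i ∈ Finset.range (M - N), ρ ^ i
            ≤ ρ ^ N * (1 / (1 - ρ)) :=
              mul_le_mul_of_nonneg_left hg (pow_nonneg hρ0.le N)
          _ = ρ ^ N / (1 - ρ) := by ring
      calc ∑ i ∈ Finset.Ico N M, 2 * Δ * (C * ρ ^ i)
          = 2 * Δ * C * ∑ i ∈ Finset.Ico N M, ρ ^ i := by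
            rw [Finset.mul_sum]; exact Finset.sum_congr rfl fun i _ => by ring
        _ ≤ 2 * Δ * C * (ρ ^ N / (1 - ρ)) := by
            refine mul_le_mul_of_nonneg_left geo ?_
            exact mul_nonneg (by linarith) (by linarith)
        _ = 2 * Δ * (C * ρ ^ N / (1 - ρ)) := by ring
    rw [hpart1]
    exact add_le_add_right hpart2 _
  -- main bound for each T
  have main : ∀ T : ℕ, 1 ≤ T →
      ∑ s, |ν s - μ s| ≤ (2 * Δ * N + 2 * Δ * (C * ρ ^ N / (1 - ρ))) + C * ρ ^ T := by
    intro T hT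
    calc ∑ s, |ν s - μ s|
        = ∑ s, |(∑ i ∈ Finset.range T, Matrix.vecMul w (P ^ i) s)
            + (Matrix.vecMul ν (P ^ T) s - μ s)| := by
          exact Finset.sum_congr rfl fun s _ => by rw [tel T s]
      _ ≤ ∑ s, ((∑ i ∈ Finset.range T, |Matrix.vecMul w (P ^ i) s|)
            + |Matrix.vecMul ν (P ^ T) s - μ s|) := by
          refine Finset.sum_le_sum fun s _ => ?_
          exact le_trans (abs_add_le _ _)
            (add_le_add_left (Finset.abs_sum_le_sum_abs _ _) _)
      _ = (∑ i ∈ Finset.range T, ∑ s, |Matrix.vecMul w (P ^ i) s|)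
            + ∑ s, |Matrix.vecMul ν (P ^ T) s - μ s| := by
          rw [Finset.sum_add_distrib, Finset.sum_comm]
      _ ≤ (∑ i ∈ Finset.range T, (if i < N then 2 * Δ else 2 * Δ * (C * ρ ^ i)))
            + C * ρ ^ T :=
          add_le_add (Finset.sum_le_sum fun i _ => gbound i) (hmix ν hν0 hν1 T hT)
      _ ≤ _ := add_le_add_left (sumb T) _
  -- pass to the limit
  have hdist : ∑ s, |ν s - μ s| ≤ 2 * Δ * N + 2 * Δ * (C * ρ ^ N / (1 - ρ)) := by
    have hten : Filter.Tendsto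
        (fun T : ℕ => (2 * Δ * N + 2 * Δ * (C * ρ ^ N / (1 - ρ))) + C * ρ ^ T)
        Filter.atTop (nhds ((2 * Δ * N + 2 * Δ * (C * ρ ^ N / (1 - ρ))) + C * 0)) := by
      exact Filter.Tendsto.const_add _
        ((tendsto_pow_atTop_nhds_zero_of_lt_one hρ0.le hρ1).const_mul C)
    rw [mul_zero, add_zero] at hten
    apply ge_of_tendsto hten
    filter_upwards [Filter.eventually_ge_atTop 1] with T hT
    exact main T hT
  -- conclude
  have hfinal : (∑ s, ν s * f s) - ∑ s, μ s * f s ≤ ∑ s, |ν s - μ s| := by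
    rw [← Finset.sum_sub_distrib]
    refine le_trans (le_abs_self _) ((Finset.abs_sum_le_sum_abs _ _).trans ?_)
    refine Finset.sum_le_sum fun s _ => ?_
    have h : ν s * f s - μ s * f s = (ν s - μ s) * f s := by ring
    rw [h, abs_mul]
    calc |ν s - μ s| * |f s| ≤ |ν s - μ s| * 1 := by
          refine mul_le_mul_of_nonneg_left ?_ (abs_nonneg _)
          rw [abs_of_nonneg (hf s).1]; exact (hf s).2
      _ = |ν s - μ s| := mul_one _
  have hβ : 2 * ((⌈Real.log C / Real.log (1 / ρ)⌉ : ℝ)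
        + C * ρ ^ (⌈Real.log C / Real.log (1 / ρ)⌉ : ℤ) / (1 - ρ)) * Δ
      = 2 * Δ * N + 2 * Δ * (C * ρ ^ N / (1 - ρ)) := by
    rw [hNcast, hzpow]; ring
  rw [hβ]
  linarith [hdist, hη, hfinal]
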